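/- For every θ ∈ [0, π], the definite integral ∫_{−(π−θ)/2}^{(π−θ)/2} cos²(β + θ/2)·cos²(β − θ/2) dβ equals (1/8)·[(π − θ)·(2 + cos(2θ)) + (3/2)·sin(2θ)]. -/

import Mathlib

open Real

/-- For every `θ ∈ [0, π]`,
`∫_{−(π−θ)/2}^{(π−θ)/2} cos²(β + θ/2) cos²(β − θ/2) dβ
  = (1/8) [(π − θ)(2 + cos(2θ)) + (3/2) sin(2θ)]`. -/
theorem stmt18 (θ : ℝ) (h0 : 0 ≤ θ) (h1 : θ ≤ π) :
    (∫ β in (-((π - θ) / 2))..((π - θ) / 2),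
        Real.cos (β + θ / 2) ^ 2 * Real.cos (β - θ / 2) ^ 2) =
      (1 / 8) * ((π - θ) * (2 + Real.cos (2 * θ)) + (3 / 2) * Real.sin (2 * θ)) := by
  set F : ℝ → ℝ := fun β =>
    (1/4) * (β/2 + Real.sin (4*β)/8 + Real.cos θ * Real.sin (2*β) + Real.cos θ^2 * β)
    with hFdef
  have hderiv : ∀ β : ℝ, HasDerivAt F
      (Real.cos (β + θ / 2) ^ 2 * Real.cos (β - θ / 2) ^ 2) β := by
    intro β
    have h1 : HasDerivAt (fun β : ℝ => β/2 + Real.sin (4*β)/8 + Real.cos θ * Real.sin (2*β)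
        + Real.cos θ^2 * β)
        (1/2 + (Real.cos (4*β) * 4)/8 + Real.cos θ * (Real.cos (2*β) * 2)
          + Real.cos θ^2 * 1) β := by
      have hs4 : HasDerivAt (fun β : ℝ => Real.sin (4*β)) (Real.cos (4*β) * 4) β := by
        simpa [Function.comp_def] using (Real.hasDerivAt_sin (4*β)).comp β ((hasDerivAt_id β).const_mul 4)
      have hs2 : HasDerivAt (fun β : ℝ => Real.sin (2*β)) (Real.cos (2*β) * 2) β := by
        simpa [Function.comp_def] using (Real.hasDerivAt_sin (2*β)).comp β ((hasDerivAt_id β).const_mul 2)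
      exact (((hasDerivAt_id β).div_const 2).add (hs4.div_const 8)).add
        (hs2.const_mul (Real.cos θ)) |>.add ((hasDerivAt_id β).const_mul (Real.cos θ^2))
    have := h1.const_mul (1/4 : ℝ)
    refine this.congr_deriv (Eq.symm ?_)
    -- trig identity
    have hc2 : Real.cos (2*β) = 2 * Real.cos β^2 - 1 := Real.cos_two_mul β
    have hc4 : Real.cos (4*β) = 2 * Real.cos (2*β)^2 - 1 := by
      have : (4:ℝ)*β = 2*(2*β) := by ring
      rw [this, Real.cos_two_mul]
    have hct : Real.cos θ = 2 * Real.cos (θ/2)^2 - 1 := by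
      have : θ = 2*(θ/2) := by ring
      nth_rewrite 1 [this]
      rw [Real.cos_two_mul]
    have hs : Real.sin β^2 = 1 - Real.cos β^2 := by
      nlinarith [Real.sin_sq_add_cos_sq β]
    have hS : Real.sin (θ/2)^2 = 1 - Real.cos (θ/2)^2 := by
      nlinarith [Real.sin_sq_add_cos_sq (θ/2)]
    rw [Real.cos_add, Real.cos_sub, hc4, hc2, hct]
    set c := Real.cos β
    set sβ := Real.sin β
    set C := Real.cos (θ/2)
    set S := Real.sin (θ/2)
    linear_combination (-((c^2*C^2 - sβ^2*S^2) + (c^2 + C^2 - 1)) * sβ^2) * hS +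
      (-((c^2*C^2 - sβ^2*S^2) + (c^2 + C^2 - 1)) * (1 - C^2)) * hs
  have hcont : IntervalIntegrable
      (fun β => Real.cos (β + θ / 2) ^ 2 * Real.cos (β - θ / 2) ^ 2)
      MeasureTheory.volume (-((π - θ) / 2)) ((π - θ) / 2) := by
    apply Continuous.intervalIntegrable
    continuity
  rw [intervalIntegral.integral_eq_sub_of_hasDerivAt (fun β _ => hderiv β) hcont]
  have e4 : Real.sin (4 * ((π - θ)/2)) = - Real.sin (2*θ) := by
    have : (4:ℝ) * ((π - θ)/2) = -(2*θ) + 2*π := by ring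
    rw [this, Real.sin_add_two_pi, Real.sin_neg]
  have e4' : Real.sin (4 * -((π - θ)/2)) = Real.sin (2*θ) := by
    have : (4:ℝ) * -((π - θ)/2) = -(4 * ((π - θ)/2)) := by ring
    rw [this, Real.sin_neg, e4, neg_neg]
  have e2 : Real.sin (2 * ((π - θ)/2)) = Real.sin θ := by
    have : (2:ℝ) * ((π - θ)/2) = π - θ := by ring
    rw [this, Real.sin_pi_sub]
  have e2' : Real.sin (2 * -((π - θ)/2)) = - Real.sin θ := by
    have : (2:ℝ) * -((π - θ)/2) = -(2 * ((π - θ)/2)) := by ring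
    rw [this, Real.sin_neg, e2]
  simp only [hFdef]
  rw [e4, e4', e2, e2', Real.sin_two_mul, Real.cos_two_mul]
  ring
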